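/- Let sets G_{j+1} ⊆ ℤ (for 1 ≤ j < J) satisfy: k_j ∈ G_{j+1}; G_j ⊆ G_{j+1} for 1 < j < J; and G_{j+1} − Δk_j ⊆ G_j for 1 < j < J, where Δk_j = k_{j+1} − k_j. Then for all integers 1 < i ≤ i' < J and any positive integers m_i,…,m_{i'}, the set G_{i'+1} − ∑_{j'=i}^{i'} m_{j'} Δk_{j'} is contained in G_i; in particular k_{i'} − ∑_{j'=i}^{i'} m_{j'} Δk_{j'} ∈ G_i. -/

import Mathlib

/-- Iteration lemma: if the sets `Gs (j+1)` (playing the role of `G_{j+1}` for `1 ≤ j < J`)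
satisfy `k j ∈ Gs (j+1)`, `Gs j ⊆ Gs (j+1)` for `1 < j < J`, and `Gs (j+1) - Δk j ⊆ Gs j` for
`1 < j < J`, then for all `1 < i ≤ i' < J` and positive integers `m i, …, m i'`, the set
`Gs (i'+1) - ∑_{j'=i}^{i'} m j' * Δk j'` is contained in `Gs i`; in particular
`k i' - ∑_{j'=i}^{i'} m j' * Δk j' ∈ Gs i`. -/
theorem gSet_iteration (J : ℕ) (k : ℕ → ℤ) (Gs : ℕ → Set ℤ)
    (hmem : ∀ j, 1 ≤ j → j < J → k j ∈ Gs (j + 1))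
    (hnest : ∀ j, 1 < j → j < J → Gs j ⊆ Gs (j + 1))
    (hanti : ∀ j, 1 < j → j < J → ∀ x ∈ Gs (j + 1), x - (k (j + 1) - k j) ∈ Gs j) :
    ∀ i i' : ℕ, 1 < i → i ≤ i' → i' < J → ∀ m : ℕ → ℤ,
      (∀ j', i ≤ j' → j' ≤ i' → 0 < m j') →
      (∀ x ∈ Gs (i' + 1),
        x - ∑ j' ∈ Finset.Icc i i', m j' * (k (j' + 1) - k j') ∈ Gs i) ∧
      k i' - ∑ j' ∈ Finset.Icc i i', m j' * (k (j' + 1) - k j') ∈ Gs i := by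
  -- single-level iterated step
  have single : ∀ j, 1 < j → j < J → ∀ c : ℤ, 0 < c →
      ∀ x ∈ Gs (j + 1), x - c * (k (j + 1) - k j) ∈ Gs j := by
    intro j hj hjJ c hc
    have hc' : 1 ≤ c := hc
    refine Int.le_induction (motive := fun c _ => ∀ x ∈ Gs (j + 1), x - c * (k (j + 1) - k j) ∈ Gs j)
      ?_ ?_ c hc'
    · intro x hx
      simpa using hanti j hj hjJ x hx
    · intro n hn ih x hx
      have h1 := ih x hx
      have h2 := hanti j hj hjJ _ (hnest j hj hjJ h1)
      have : x - n * (k (j + 1) - k j) - (k (j + 1) - k j)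
          = x - (n + 1) * (k (j + 1) - k j) := by ring
      rwa [this] at h2
  intro i i' hi hii' hi'J m hm
  have main : ∀ x ∈ Gs (i' + 1),
      x - ∑ j' ∈ Finset.Icc i i', m j' * (k (j' + 1) - k j') ∈ Gs i := by
    clear hmem
    induction i', hii' using Nat.le_induction with
    | base =>
      intro x hx
      rw [Finset.Icc_self, Finset.sum_singleton]
      exact single i hi hi'J (m i) (hm i le_rfl le_rfl) x hx
    | succ n hn ih =>
      intro x hx
      have hnJ : n < J := Nat.lt_of_succ_lt hi'J
      have hn1 : 1 < n + 1 := lt_of_lt_of_le hi (Nat.le_succ_of_le hn)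
      have h1 : x - m (n + 1) * (k (n + 1 + 1) - k (n + 1)) ∈ Gs (n + 1) :=
        single (n + 1) hn1 hi'J (m (n + 1)) (hm (n + 1) (Nat.le_succ_of_le hn) le_rfl) x hx
      have h2 := ih hnJ (fun j' hj1 hj2 => hm j' hj1 (Nat.le_succ_of_le hj2)) _ h1
      rw [Finset.sum_Icc_succ_top (Nat.le_succ_of_le hn)]
      have : x - m (n + 1) * (k (n + 1 + 1) - k (n + 1))
            - ∑ j' ∈ Finset.Icc i n, m j' * (k (j' + 1) - k j')
          = x - (∑ j' ∈ Finset.Icc i n, m j' * (k (j' + 1) - k j')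
            + m (n + 1) * (k (n + 1 + 1) - k (n + 1))) := by ring
      rwa [this] at h2
  exact ⟨main, main _ (hmem i' (le_of_lt (lt_of_lt_of_le hi hii')) hi'J)⟩
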